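/- Let x₀ > 0, let q : [0,x₀] → ℝ be nonnegative, continuous and monotone increasing, and let z > 0 satisfy z² > q(x₀). Let φ be the Prüfer angle of q at z, let i ≥ 0 be an integer, D ∈ [π/2, π], and let a ≤ b in (0,x₀] satisfy φ(a) = iπ + π/2 and φ(b) = iπ + π/2 + D. Then (π/4)·( (q(a)/z²) / (1 − (3/4)·q(a)/z²) ) ≤ ∫ₐᵇ (q(x)/z)·sin²φ(x) dx ≤ (π/2)·( (q(b)/z²) / (1 − q(b)/z²) ). -/

import Mathlib

open Real Set

lemma hasDerivAt_F (c k : ℝ) (hc0 : 0 ≤ c) (hc1 : c < 1) (hk : 0 < k) (hk2 : k ^ 2 = 1 - c) (θ : ℝ) :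
    HasDerivAt (fun t : ℝ =>
        (t - Real.arctan ((1 - k) * Real.sin t * Real.cos t /
          (Real.cos t ^ 2 + k * Real.sin t ^ 2))) / k - t)
      (c * Real.sin θ ^ 2 / (1 - c * Real.sin θ ^ 2)) θ := by
  have hpy := Real.sin_sq_add_cos_sq θ
  have hDn : 0 < Real.cos θ ^ 2 + k * Real.sin θ ^ 2 := by nlinarith [sq_nonneg (Real.sin θ), sq_nonneg (Real.cos θ)]
  have hE : 0 < 1 - c * Real.sin θ ^ 2 := by nlinarith [sq_nonneg (Real.sin θ)]
  have hs := Real.hasDerivAt_sin θ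
  have hc := Real.hasDerivAt_cos θ
  have hN : HasDerivAt (fun t => (1 - k) * Real.sin t * Real.cos t)
      ((1 - k) * Real.cos θ * Real.cos θ + (1 - k) * Real.sin θ * (-Real.sin θ)) θ :=
    ((hs.const_mul (1 - k)).mul hc)
  have hD : HasDerivAt (fun t => Real.cos t ^ 2 + k * Real.sin t ^ 2)
      ((2 * Real.cos θ ^ 1 * -Real.sin θ) + k * (2 * Real.sin θ ^ 1 * Real.cos θ)) θ := by
    exact (hc.pow 2).add ((hs.pow 2).const_mul k)
  have hu := hN.div hD (ne_of_gt hDn)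
  have harc := (Real.hasDerivAt_arctan _).comp θ hu
  have hF := (((hasDerivAt_id θ).sub harc).div_const k).sub (hasDerivAt_id θ)
  refine hF.congr_deriv ?_; symm
  simp only [Pi.div_apply]
  set s := Real.sin θ with hsdef
  set co := Real.cos θ with hcodef
  clear_value s co
  clear hc hs hN hD hu harc hF hsdef hcodef
  have hceq : c = 1 - k^2 := by linarith
  subst hceq
  have h1 : (1 + ((1 - k) * s * co / (co ^ 2 + k * s ^ 2)) ^ 2) ≠ 0 := by positivity
  field_simp
  linear_combination (s^2*co^2*k - s^2*co^2*k^3 + s^4*k - s^4*k^3) * hpy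

lemma integral_h_eval (c : ℝ) (hc0 : 0 ≤ c) (hc1 : c < 1) (i : ℕ)
    (k : ℝ) (hk : 0 < k) (hk2 : k ^ 2 = 1 - c) :
    ∫ θ in ((i : ℝ) * π + π / 2)..((i : ℝ) * π + π),
        c * Real.sin θ ^ 2 / (1 - c * Real.sin θ ^ 2) = π / 2 * (1 / k - 1) := by
  have hF := hasDerivAt_F c k hc0 hc1 hk hk2
  have hEpos : ∀ θ : ℝ, 0 < 1 - c * Real.sin θ ^ 2 := by
    intro θ
    nlinarith [sq_nonneg (Real.sin θ), Real.sin_sq_le_one θ]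
  have hcont : Continuous fun θ : ℝ => c * Real.sin θ ^ 2 / (1 - c * Real.sin θ ^ 2) := by
    apply Continuous.div (by fun_prop) (by fun_prop)
    exact fun θ => ne_of_gt (hEpos θ)
  rw [intervalIntegral.integral_eq_sub_of_hasDerivAt (fun θ _ => hF θ)
    (hcont.intervalIntegrable _ _)]
  have h1 : Real.sin ((i : ℝ) * π + π) = 0 := by
    simp [Real.sin_add, Real.sin_nat_mul_pi]
  have h2 : Real.cos ((i : ℝ) * π + π / 2) = 0 := by
    simp [Real.cos_add, Real.sin_nat_mul_pi]
  rw [h1, h2]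
  simp only [mul_zero, zero_mul, mul_comm, zero_div, Real.arctan_zero]
  field_simp
  ring

set_option maxHeartbeats 1000000 in
theorem half_period_sin_sq_integral_bounds
    (x₀ : ℝ) (hx₀ : 0 < x₀)
    (q : ℝ → ℝ) (hqc : ContinuousOn q (Icc 0 x₀))
    (hqnonneg : ∀ x ∈ Icc 0 x₀, 0 ≤ q x)
    (hmono : MonotoneOn q (Icc 0 x₀))
    (z : ℝ) (hz : 0 < z) (hsup : q x₀ < z ^ 2)
    (φ : ℝ → ℝ) (hφ0 : φ 0 = 0)
    (hφODE : ∀ x ∈ Icc 0 x₀, HasDerivAt φ (z - q x / z * Real.sin (φ x) ^ 2) x)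
    (i : ℕ) (D : ℝ) (hD : D ∈ Icc (π / 2) π)
    (a b : ℝ) (ha : a ∈ Ioc 0 x₀) (hb : b ∈ Ioc 0 x₀) (hab : a ≤ b)
    (hφa : φ a = i * π + π / 2) (hφb : φ b = i * π + π / 2 + D) :
    π / 4 * ((q a / z ^ 2) / (1 - 3 / 4 * (q a / z ^ 2))) ≤
        (∫ x in a..b, (q x / z) * Real.sin (φ x) ^ 2) ∧
      (∫ x in a..b, (q x / z) * Real.sin (φ x) ^ 2) ≤
        π / 2 * ((q b / z ^ 2) / (1 - q b / z ^ 2)) := by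
  have hπ := Real.pi_pos
  have hz2 : (0:ℝ) < z ^ 2 := by positivity
  have haI : a ∈ Icc 0 x₀ := ⟨ha.1.le, ha.2⟩
  have hbI : b ∈ Icc 0 x₀ := ⟨(lt_of_lt_of_le ha.1 hab).le, hb.2⟩
  have hx₀I : x₀ ∈ Icc 0 x₀ := ⟨hx₀.le, le_rfl⟩
  have hsub : Icc a b ⊆ Icc 0 x₀ := fun x hx => ⟨le_trans haI.1 hx.1, le_trans hx.2 hbI.2⟩
  have hqa0 : 0 ≤ q a := hqnonneg a haI
  have hqab : q a ≤ q b := hmono haI hbI hab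
  have hqbx : q b ≤ q x₀ := hmono hbI hx₀I hb.2
  have hqb_lt : q b < z ^ 2 := lt_of_le_of_lt hqbx hsup
  set ca := q a / z ^ 2 with hca_def
  set cb := q b / z ^ 2 with hcb_def
  have hca0 : 0 ≤ ca := div_nonneg hqa0 hz2.le
  have hcb0 : 0 ≤ cb := div_nonneg (hqa0.trans hqab) hz2.le
  have hcb1 : cb < 1 := (div_lt_one hz2).mpr hqb_lt
  have hca1 : ca < 1 := lt_of_le_of_lt (by rw [hca_def, hcb_def] at *; exact div_le_div_of_nonneg_right hqab hz2.le) hcb1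
  have hca_cb : ca ≤ cb := by
    rw [hca_def, hcb_def]
    exact div_le_div_of_nonneg_right hqab hz2.le
  -- the derivative of φ
  set φd : ℝ → ℝ := fun x => z - q x / z * Real.sin (φ x) ^ 2 with hφd_def
  have hφc : ContinuousOn φ (Icc 0 x₀) := fun x hx =>
    (hφODE x hx).continuousAt.continuousWithinAt
  have hqcab : ContinuousOn q (Icc a b) := hqc.mono hsub
  have hφcab : ContinuousOn φ (Icc a b) := hφc.mono hsub
  have hsinφ : ContinuousOn (fun x => Real.sin (φ x) ^ 2) (Icc a b) :=
    (Real.continuous_sin.comp_continuousOn hφcab).pow 2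
  have hφdcab : ContinuousOn φd (Icc a b) :=
    continuousOn_const.sub ((hqcab.div_const z).mul hsinφ)
  have hIcont : ContinuousOn (fun x => (q x / z) * Real.sin (φ x) ^ 2) (Icc a b) :=
    (hqcab.div_const z).mul hsinφ
  -- the comparison functions
  set g : ℝ → ℝ → ℝ := fun c θ => c * Real.sin θ ^ 2 / (1 - c * Real.sin θ ^ 2) with hg_def
  have hgE : ∀ c : ℝ, 0 ≤ c → c < 1 → ∀ θ : ℝ, 0 < 1 - c * Real.sin θ ^ 2 := by
    intro c h0 h1 θ
    nlinarith [sq_nonneg (Real.sin θ), Real.sin_sq_le_one θ]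
  have hgcont : ∀ c : ℝ, 0 ≤ c → c < 1 → Continuous (g c) := by
    intro c h0 h1
    apply Continuous.div (by fun_prop) (by fun_prop)
    exact fun θ => ne_of_gt (hgE c h0 h1 θ)
  have hgnonneg : ∀ c : ℝ, 0 ≤ c → c < 1 → ∀ θ : ℝ, 0 ≤ g c θ := by
    intro c h0 h1 θ
    have := hgE c h0 h1 θ
    have : 0 ≤ c * Real.sin θ ^ 2 := mul_nonneg h0 (sq_nonneg _)
    positivity
  -- substitution
  have hsubst : ∀ c : ℝ, 0 ≤ c → c < 1 →
      (∫ x in a..b, φd x * g c (φ x)) = ∫ θ in φ a..φ b, g c θ := by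
    intro c h0 h1
    have h := intervalIntegral.integral_comp_smul_deriv (a := a) (b := b)
      (f := φ) (f' := φd) (g := g c)
      (fun x hx => hφODE x (hsub ((uIcc_of_le hab ▸ hx)))) 
      (by rw [uIcc_of_le hab]; exact hφdcab) (hgcont c h0 h1)
    simpa [smul_eq_mul, Function.comp] using h
  -- pointwise facts on [a,b]
  have hqx : ∀ x ∈ Icc a b, q a ≤ q x ∧ q x ≤ q b := fun x hx =>
    ⟨hmono haI (hsub hx) hx.1, hmono (hsub hx) hbI hx.2⟩
  -- lower pointwise bound
  have hptlow : ∀ x ∈ Icc a b, φd x * g ca (φ x) ≤ (q x / z) * Real.sin (φ x) ^ 2 := by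
    intro x hx
    set s := Real.sin (φ x) ^ 2 with hs_def
    have hs0 : 0 ≤ s := sq_nonneg _
    have hs1 : s ≤ 1 := Real.sin_sq_le_one _
    have hE : 0 < 1 - ca * s := by nlinarith
    have hcaz : ca * z = q a / z := by rw [hca_def]; field_simp
    have h1 : ca * z ≤ q x / z := by
      rw [hcaz]; exact div_le_div_of_nonneg_right (hqx x hx).1 hz.le
    show (z - q x / z * s) * (ca * s / (1 - ca * s)) ≤ q x / z * s
    rw [mul_div_assoc', div_le_iff₀ hE]
    nlinarith [mul_le_mul_of_nonneg_right h1 hs0, mul_nonneg (mul_nonneg hca0 hs0) hs0,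
      mul_nonneg hs0 hs0]
  -- upper pointwise bound
  have hptup : ∀ x ∈ Icc a b, (q x / z) * Real.sin (φ x) ^ 2 ≤ φd x * g cb (φ x) := by
    intro x hx
    set s := Real.sin (φ x) ^ 2 with hs_def
    have hs0 : 0 ≤ s := sq_nonneg _
    have hs1 : s ≤ 1 := Real.sin_sq_le_one _
    have hE : 0 < 1 - cb * s := by nlinarith
    have hcbz : cb * z = q b / z := by rw [hcb_def]; field_simp
    have h1 : q x / z ≤ cb * z := by
      rw [hcbz]; exact div_le_div_of_nonneg_right (hqx x hx).2 hz.le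
    show q x / z * s ≤ (z - q x / z * s) * (cb * s / (1 - cb * s))
    rw [mul_div_assoc', le_div_iff₀ hE]
    nlinarith [mul_le_mul_of_nonneg_right h1 hs0]
  -- integrability
  have hint1 : IntervalIntegrable (fun x => (q x / z) * Real.sin (φ x) ^ 2) MeasureTheory.volume a b := by
    apply ContinuousOn.intervalIntegrable; rwa [uIcc_of_le hab]
  have hint2 : ∀ c : ℝ, 0 ≤ c → c < 1 →
      IntervalIntegrable (fun x => φd x * g c (φ x)) MeasureTheory.volume a b := by
    intro c h0 h1
    apply ContinuousOn.intervalIntegrable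
    rw [uIcc_of_le hab]
    exact hφdcab.mul ((hgcont c h0 h1).comp_continuousOn hφcab)
  have hlow : (∫ θ in φ a..φ b, g ca θ) ≤ ∫ x in a..b, (q x / z) * Real.sin (φ x) ^ 2 := by
    rw [← hsubst ca hca0 hca1]
    exact intervalIntegral.integral_mono_on hab (hint2 ca hca0 hca1) hint1 hptlow
  have hup : (∫ x in a..b, (q x / z) * Real.sin (φ x) ^ 2) ≤ ∫ θ in φ a..φ b, g cb θ := by
    rw [← hsubst cb hcb0 hcb1]
    exact intervalIntegral.integral_mono_on hab hint1 (hint2 cb hcb0 hcb1) hptup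
  constructor
  · -- lower bound
    set k := Real.sqrt (1 - ca) with hk_def
    have hk : 0 < k := Real.sqrt_pos.mpr (by linarith)
    have hk2 : k ^ 2 = 1 - ca := Real.sq_sqrt (by linarith)
    have hk1 : k ≤ 1 := by nlinarith
    have hint3 : IntervalIntegrable (g ca) MeasureTheory.volume ((i:ℝ)*π+π/2) ((i:ℝ)*π+π) :=
      (hgcont ca hca0 hca1).intervalIntegrable _ _
    have hint4 : IntervalIntegrable (g ca) MeasureTheory.volume ((i:ℝ)*π+π) (φ b) :=
      (hgcont ca hca0 hca1).intervalIntegrable _ _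
    have hsplit : (∫ θ in φ a..φ b, g ca θ) =
        (∫ θ in ((i:ℝ)*π+π/2)..((i:ℝ)*π+π), g ca θ) + ∫ θ in ((i:ℝ)*π+π)..φ b, g ca θ := by
      rw [hφa]
      exact (intervalIntegral.integral_add_adjacent_intervals hint3 hint4).symm
    have hsecond : 0 ≤ ∫ θ in ((i:ℝ)*π+π)..φ b, g ca θ := by
      apply intervalIntegral.integral_nonneg
      · rw [hφb]; linarith [hD.1]
      · exact fun u _ => hgnonneg ca hca0 hca1 u
    have hfirst : (∫ θ in ((i:ℝ)*π+π/2)..((i:ℝ)*π+π), g ca θ) = π/2 * (1/k - 1) := by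
      simp only [hg_def]
      exact integral_h_eval ca hca0 hca1 i k hk hk2
    have hval : π / 4 * (ca / (1 - 3 / 4 * ca)) ≤ π/2 * (1/k - 1) := by
      have hA : 0 < 1 - 3/4*ca := by nlinarith
      have key : ca / (1 - 3/4*ca) ≤ 2*(1/k - 1) := by
        have e : 2*(1/k - 1) = 2*(1-k)/k := by field_simp
        rw [e, div_le_div_iff₀ hA hk]
        nlinarith [pow_nonneg (show (0:ℝ) ≤ 1-k by linarith) 3]
      have := mul_le_mul_of_nonneg_left key (show (0:ℝ) ≤ π/4 by positivity)
      nlinarith [this]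
    calc π / 4 * (ca / (1 - 3 / 4 * ca)) ≤ π/2 * (1/k - 1) := hval
      _ ≤ (∫ θ in ((i:ℝ)*π+π/2)..((i:ℝ)*π+π), g ca θ) + ∫ θ in ((i:ℝ)*π+π)..φ b, g ca θ := by
          rw [hfirst]; linarith
      _ = ∫ θ in φ a..φ b, g ca θ := hsplit.symm
      _ ≤ _ := hlow
  · -- upper bound
    have h1cb : 0 < 1 - cb := by linarith
    have hθab : φ a ≤ φ b := by rw [hφa, hφb]; linarith [hD.1]
    have hupθ : (∫ θ in φ a..φ b, g cb θ) ≤ ∫ θ in φ a..φ b, cb/(1-cb) * Real.sin θ ^ 2 := by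
      apply intervalIntegral.integral_mono_on hθab
        ((hgcont cb hcb0 hcb1).intervalIntegrable _ _)
        ((by fun_prop : Continuous fun θ : ℝ => cb/(1-cb) * Real.sin θ ^ 2).intervalIntegrable _ _)
      intro θ _
      have hs0 : 0 ≤ Real.sin θ ^ 2 := sq_nonneg _
      have hs1 : Real.sin θ ^ 2 ≤ 1 := Real.sin_sq_le_one _
      have hE := hgE cb hcb0 hcb1 θ
      calc g cb θ ≤ cb * Real.sin θ ^ 2 / (1 - cb) := by
            show cb * Real.sin θ ^ 2 / (1 - cb * Real.sin θ ^ 2) ≤ _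
            rw [div_le_div_iff₀ hE h1cb]
            nlinarith [mul_nonneg hcb0 hs0,
              mul_le_mul_of_nonneg_left hs1 (mul_nonneg (mul_nonneg hcb0 hcb0) hs0)]
        _ = cb/(1-cb) * Real.sin θ ^ 2 := by ring
    have hconst : (∫ θ in φ a..φ b, cb/(1-cb) * Real.sin θ ^ 2) =
        cb/(1-cb) * ∫ θ in φ a..φ b, Real.sin θ ^ 2 := intervalIntegral.integral_const_mul _ _
    have hcosφa : Real.cos (φ a) = 0 := by
      rw [hφa]; simp [Real.cos_add, Real.sin_nat_mul_pi]
    have hsb : 0 ≤ Real.sin (φ b) * Real.cos (φ b) := by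
      have e : φ b = (i:ℝ)*π + (π/2 + D) := by rw [hφb]; ring
      have hsinD : 0 ≤ Real.sin D := Real.sin_nonneg_of_nonneg_of_le_pi (by linarith [hD.1]) hD.2
      have hcosD : Real.cos D ≤ 0 := Real.cos_nonpos_of_pi_div_two_le_of_le hD.1 (by linarith [hD.2])
      have hpy := Real.sin_sq_add_cos_sq ((i:ℝ)*π)
      have hsin_i : Real.sin ((i:ℝ)*π) = 0 := Real.sin_nat_mul_pi i
      rw [e]
      simp only [Real.sin_add, Real.cos_add, hsin_i, Real.sin_pi_div_two, Real.cos_pi_div_two]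
      nlinarith [mul_nonneg (mul_nonneg (sq_nonneg (Real.cos ((i:ℝ)*π))) (neg_nonneg.mpr hcosD)) hsinD]
    have hsin2 : (∫ θ in φ a..φ b, Real.sin θ ^ 2) ≤ π/2 := by
      have hdiff : φ b - φ a = D := by rw [hφa, hφb]; ring
      rw [integral_sin_sq, hcosφa]
      linarith [hsb, hdiff, hD.2]
    calc (∫ x in a..b, (q x / z) * Real.sin (φ x) ^ 2) ≤ ∫ θ in φ a..φ b, g cb θ := hup
      _ ≤ cb/(1-cb) * ∫ θ in φ a..φ b, Real.sin θ ^ 2 := by rw [← hconst]; exact hupθ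
      _ ≤ cb/(1-cb) * (π/2) := by
          apply mul_le_mul_of_nonneg_left hsin2 (div_nonneg hcb0 h1cb.le)
      _ = π / 2 * (cb / (1 - cb)) := by ring
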